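/- Let λ, μ > 0 and γ > 0, and consider the 4×4 real matrix J with rows (λ², μ/γ, 0, 0), (μ, 0, 0, 0), (0, 0, λ², μ/γ), (0, 0, μ, 0). Then the spectral radius of J is larger than one if and only if λ² + μ²/γ > 1. Equivalently, the quadratic z² − λ²z − μ²/γ has a root of absolute value greater than 1 if and only if λ² + μ²/γ > 1. -/

import Mathlib

open MeasureTheory ProbabilityTheory Filter Real Set
open scoped ENNReal NNReal

noncomputable section

private lemma det_aux (a b c z : ℂ) :
    Matrix.det ((algebraMap ℂ (Matrix (Fin 4) (Fin 4) ℂ) z) -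
      !![a, b, 0, 0; c, 0, 0, 0; 0, 0, a, b; 0, 0, c, 0])
    = ((z^2 - a*z - b*c))^2 := by
  simp [Matrix.det_succ_row_zero, Fin.sum_univ_succ,
    Matrix.sub_apply, Matrix.algebraMap_matrix_apply, Fin.succAbove]
  ring

private lemma key_aux (a c : ℝ) (ha : 0 < a) (hc : 0 < c) :
    (1 < (a + Real.sqrt (a ^ 2 + 4 * c)) / 2) ↔ 1 < a + c := by
  have hD : (0:ℝ) ≤ a ^ 2 + 4 * c := by nlinarith
  have hs2 : Real.sqrt (a ^ 2 + 4 * c) ^ 2 = a ^ 2 + 4 * c := Real.sq_sqrt hD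
  have hs0 : 0 ≤ Real.sqrt (a ^ 2 + 4 * c) := Real.sqrt_nonneg _
  set s := Real.sqrt (a ^ 2 + 4 * c) with hsdef
  constructor
  · intro h
    by_contra hle
    push_neg at hle
    nlinarith [mul_pos (by linarith : (0:ℝ) < s - (2 - a)) (by linarith : (0:ℝ) < s + (2 - a))]
  · intro h
    rcases le_or_gt 2 a with h2 | h2
    · have : 0 < s := by
        have : 0 < s ^ 2 := by nlinarith
        positivity
      linarith
    · have h1 : (2 - a) ^ 2 < s ^ 2 := by nlinarith
      have : 2 - a < s := by nlinarith [sq_nonneg (s - (2 - a))]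
      linarith

/-- Lemma 4 / Lemma `densityevolutioninstability`. The Jacobian at
zero of the density-evolution moment map has spectral radius larger than one iff
`λ² + μ²/γ > 1`; equivalently, the quadratic `z² − λ²z − μ²/γ` has a root of absolute
value greater than one iff `λ² + μ²/γ > 1`. -/
theorem density_evolution_instability (lam mu gamma : ℝ)
    (hlam : 0 < lam) (hmu : 0 < mu) (hgamma : 0 < gamma) :
    ((1 : ℝ) < sSup {r : ℝ | ∃ z ∈ spectrum ℂ
        (!![(lam : ℂ) ^ 2, (mu : ℂ) / (gamma : ℂ), 0, 0;
            (mu : ℂ), 0, 0, 0;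
            0, 0, (lam : ℂ) ^ 2, (mu : ℂ) / (gamma : ℂ);
            0, 0, (mu : ℂ), 0] : Matrix (Fin 4) (Fin 4) ℂ), r = ‖z‖}
      ↔ 1 < lam ^ 2 + mu ^ 2 / gamma) ∧
    ((∃ z : ℂ, z ^ 2 - (lam : ℂ) ^ 2 * z - (mu : ℂ) ^ 2 / (gamma : ℂ) = 0
        ∧ 1 < ‖z‖)
      ↔ 1 < lam ^ 2 + mu ^ 2 / gamma) := by
  set a : ℝ := lam ^ 2 with ha_def
  set c : ℝ := mu ^ 2 / gamma with hc_def
  have ha : 0 < a := by positivity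
  have hc : 0 < c := by positivity
  have hD : (0:ℝ) ≤ a ^ 2 + 4 * c := by nlinarith
  set s : ℝ := Real.sqrt (a ^ 2 + 4 * c) with hs_def
  have hs2 : s ^ 2 = a ^ 2 + 4 * c := Real.sq_sqrt hD
  have hs0 : 0 ≤ s := Real.sqrt_nonneg _
  have hsa : a < s := by nlinarith
  set rp : ℝ := (a + s) / 2 with hrp_def
  set rm : ℝ := (a - s) / 2 with hrm_def
  have hrp_pos : 0 < rp := by simp only [hrp_def]; linarith
  have hrm_neg : rm < 0 := by simp only [hrm_def]; linarith
  have hsum : rp + rm = a := by simp only [hrp_def, hrm_def]; ring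
  have hprod : rp * rm = -c := by
    simp only [hrp_def, hrm_def]
    nlinarith
  -- complex coefficients
  have hcc : ((mu : ℂ)) ^ 2 / (gamma : ℂ) = ((c : ℝ) : ℂ) := by
    simp only [hc_def]; push_cast; ring
  have hca : ((lam : ℂ)) ^ 2 = ((a : ℝ) : ℂ) := by
    simp only [ha_def]; push_cast; ring
  have hsumC : ((rp : ℂ)) + (rm : ℂ) = (a : ℂ) := by exact_mod_cast hsum
  have hprodC : ((rp : ℂ)) * (rm : ℂ) = -(c : ℂ) := by exact_mod_cast hprod
  -- the quadratic factors
  have hfact : ∀ z : ℂ, z ^ 2 - (a : ℂ) * z - (c : ℂ) = (z - rp) * (z - rm) := by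
    intro z
    have : (z - rp) * (z - rm) = z ^ 2 - ((rp : ℂ) + rm) * z + (rp : ℂ) * rm := by ring
    rw [this, hsumC, hprodC]; ring
  have hroot : ∀ z : ℂ, (z ^ 2 - (a : ℂ) * z - (c : ℂ) = 0 ↔ z = (rp : ℂ) ∨ z = (rm : ℂ)) := by
    intro z
    rw [hfact z, mul_eq_zero, sub_eq_zero, sub_eq_zero]
  have habs_rp : ‖(rp : ℂ)‖ = rp := by
    rw [Complex.norm_real, Real.norm_eq_abs, abs_of_pos hrp_pos]
  have habs_rm : ‖(rm : ℂ)‖ = -rm := by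
    rw [Complex.norm_real, Real.norm_eq_abs, abs_of_neg hrm_neg]
  have habs_le : -rm ≤ rp := by simp only [hrp_def, hrm_def]; linarith
  have hkey : (1 < rp) ↔ 1 < a + c := by
    simpa [hrp_def] using key_aux a c ha hc
  have hac : (1 : ℝ) < lam ^ 2 + mu ^ 2 / gamma ↔ 1 < a + c := Iff.rfl
  constructor
  · -- spectrum part
    have hspec : spectrum ℂ
        (!![(lam : ℂ) ^ 2, (mu : ℂ) / (gamma : ℂ), 0, 0;
            (mu : ℂ), 0, 0, 0;
            0, 0, (lam : ℂ) ^ 2, (mu : ℂ) / (gamma : ℂ);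
            0, 0, (mu : ℂ), 0] : Matrix (Fin 4) (Fin 4) ℂ) = {(rp : ℂ), (rm : ℂ)} := by
      ext z
      rw [spectrum.mem_iff, Matrix.isUnit_iff_isUnit_det, isUnit_iff_ne_zero, not_ne_iff,
        det_aux]
      rw [pow_eq_zero_iff (two_ne_zero)]
      have : z ^ 2 - (lam:ℂ)^2 * z - (mu:ℂ)/(gamma:ℂ) * (mu:ℂ) = z ^ 2 - (a:ℂ) * z - (c:ℂ) := by
        rw [hca]
        congr 1
        rw [← hcc]
        ring
      rw [this, hroot z]
      simp [Set.mem_insert_iff]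
    have hset : {r : ℝ | ∃ z ∈ spectrum ℂ
        (!![(lam : ℂ) ^ 2, (mu : ℂ) / (gamma : ℂ), 0, 0;
            (mu : ℂ), 0, 0, 0;
            0, 0, (lam : ℂ) ^ 2, (mu : ℂ) / (gamma : ℂ);
            0, 0, (mu : ℂ), 0] : Matrix (Fin 4) (Fin 4) ℂ), r = ‖z‖}
        = {rp, -rm} := by
      rw [hspec]
      ext r
      simp only [Set.mem_setOf_eq, Set.mem_insert_iff, Set.mem_singleton_iff]
      constructor
      · rintro ⟨z, hz | hz, rfl⟩ <;> subst hz <;> simp [habs_rp, habs_rm, hrp_pos.le, hrm_neg.le]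
      · rintro (rfl | rfl)
        · exact ⟨(rp : ℂ), Or.inl rfl, habs_rp.symm⟩
        · exact ⟨(rm : ℂ), Or.inr rfl, habs_rm.symm⟩
    rw [hset, csSup_pair, hac, ← hkey]
    rw [sup_eq_left.mpr habs_le]
  · -- quadratic part
    rw [hac, ← hkey]
    constructor
    · rintro ⟨z, hz, habs⟩
      have : z = (rp : ℂ) ∨ z = (rm : ℂ) := by
        rw [← hroot z]
        rw [← hz, hca, hcc]
      rcases this with rfl | rfl
      · rwa [habs_rp] at habs
      · rw [habs_rm] at habs; linarith
    · intro h
      refine ⟨(rp : ℂ), ?_, by rwa [habs_rp]⟩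
      rw [hca, hcc, (hroot (rp : ℂ)).mpr (Or.inl rfl)]

end
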